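/- For every integer x ≥ 1, P(2x, 2x) = Σ_{j=0}^{x−1} ((2j−1)!! · x! · (2x−1)!! · (2x−2j) · (2x−1)!) / ((4x−1)!! · j! · (x−j)! · (2x−2j−1)!! · (2j)!), as an identity in ℚ. -/

import Mathlib

/-- `P I S` is the probability that a fixed clean mobile gets infected in the
Bluetooth malware model with `I` infected and `S` clean mobiles. -/
def P : ℕ → ℕ → ℚ
  | 0, _ => 0
  | _ + 1, 0 => 0
  | I + 1, S + 1 =>
      1 / ((I : ℚ) + S + 1) + ((S : ℚ) / ((I : ℚ) + S + 1)) * P I S +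
        ((I : ℚ) / ((I : ℚ) + S + 1)) * P (I - 1) (S + 1)
  termination_by I _ => I

lemma Pval : ∀ I S : ℕ, I ≤ S → P I S = (I : ℚ) / ((I : ℚ) + S - 1) := by
  intro I
  induction I using Nat.strong_induction_on with
  | _ I ih =>
    match I with
    | 0 => intro S _; simp [P]
    | 1 =>
      intro S hS
      obtain ⟨S', rfl⟩ := Nat.exists_eq_add_of_le hS
      rw [show 1 + S' = S' + 1 from Nat.add_comm _ _]
      rw [P]
      simp only [P, Nat.cast_zero]
      have h1 : (S' : ℚ) + 1 ≠ 0 := by positivity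
      push_cast
      field_simp
      ring
    | I' + 2 =>
      intro S hS
      obtain ⟨S', rfl⟩ : ∃ S', S = S' + 1 := ⟨S - 1, by omega⟩
      have hS' : I' + 1 ≤ S' := by omega
      rw [P]
      rw [ih (I' + 1) (by omega) S' hS']
      rw [show I' + 1 - 1 = I' from rfl]
      rw [ih I' (by omega) (S' + 1) (by omega)]
      have h1 : (I' : ℚ) + S' ≠ 0 := by
        have : (1:ℚ) ≤ (I' : ℚ) + S' := by
          have : (1:ℕ) ≤ I' + S' := by omega
          exact_mod_cast this
        linarith
      have h2 : (I' : ℚ) + 1 + S' + 1 ≠ 0 := by positivity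
      push_cast
      have e1 : ((I':ℚ) + 1) + ((S':ℚ) + 1) - 1 = (I':ℚ) + S' + 1 := by ring
      have e2 : (I':ℚ) + ((S':ℚ) + 1) - 1 = (I':ℚ) + S' := by ring
      rw [e2]
      have e3 : (I':ℚ) + 1 + (S':ℚ) - 1 = (I':ℚ) + S' := by ring
      rw [e3]
      have e4 : (I':ℚ) + 2 + ((S':ℚ) + 1) - 1 = (I':ℚ) + 1 + S' + 1 := by ring
      rw [e4]
      field_simp
      ring

/-- Double factorial `n‼`; with natural subtraction as argument this also
implements the convention `(-1)‼ = 0‼ = 1`. -/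
def dfact : ℕ → ℕ
  | 0 => 1
  | 1 => 1
  | n + 2 => (n + 2) * dfact n

open Nat
lemma dfact_even (n : ℕ) : dfact (2 * n) = 2 ^ n * n ! := by
  induction n with
  | zero => rfl
  | succ n ih =>
    have : 2 * (n + 1) = 2 * n + 2 := by ring
    rw [this, dfact, ih, Nat.factorial_succ]
    ring

lemma dfact_odd (n : ℕ) : 2 ^ n * n ! * dfact (2 * n + 1) = (2 * n + 1)! := by
  induction n with
  | zero => rfl
  | succ n ih =>
    have h1 : 2 * (n + 1) + 1 = (2 * n + 1) + 2 := by ring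
    rw [h1, dfact]
    have h2 : ((2 * n + 1) + 2)! = (2 * n + 3) * ((2 * n + 2) * (2 * n + 1)!) := by
      rw [show (2*n+1)+2 = (2*n+2)+1 from rfl, Nat.factorial_succ, Nat.factorial_succ]
    rw [h2, ← ih, Nat.factorial_succ]
    ring

noncomputable section
open Nat

/-- main sum term -/
def fQ (x m : ℕ) : ℚ := m * 4 ^ m * ((x)! : ℚ) ^ 2 / ((((x - m))! : ℚ) ^ 2 * ((2 * m)! : ℚ))

/-- WZ certificate term -/
def hQ (x m : ℕ) : ℚ :=
  ((m : ℚ) - 1) * (2 * (4 * (x:ℚ) + 1) * m ^ 2 - (12 * (x:ℚ)^2 + 16 * x + 3) * m + (6 * (x:ℚ)^2 + 6 * x + 1)) *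
    m * 4 ^ m * (((x + 1))! : ℚ) ^ 2 / ((((x + 1 - m))! : ℚ) ^ 2 * ((2 * m)! : ℚ))

/-- closed form -/
def rQ (x : ℕ) : ℚ :=
  4 * (x:ℚ)^2 * ((4 * x - 2)! : ℚ) * ((x)! : ℚ)^2 / (((2 * x)! : ℚ)^2 * ((2 * x - 1)! : ℚ))

lemma wz (x m : ℕ) (hm : m ≤ x) :
    (x:ℚ)^2 * (2*(x:ℚ)+1)^2 * fQ (x+1) m - ((x:ℚ)+1)^2 * (16*(x:ℚ)^2-1) * fQ x m
      = hQ x (m+1) - hQ x m := by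
  obtain ⟨k, rfl⟩ := Nat.exists_eq_add_of_le hm
  unfold fQ hQ
  have e1 : m + k - m = k := by omega
  have e2 : m + k + 1 - m = k + 1 := by omega
  have e3 : m + k + 1 - (m + 1) = k := by omega
  rw [e1, e2, e3]
  have hfk : ((k)! : ℚ) ≠ 0 := by exact_mod_cast (Nat.factorial_pos k).ne'
  have hf2m : (((2*m))! : ℚ) ≠ 0 := by exact_mod_cast (Nat.factorial_pos _).ne'
  have hk1 : ((k+1)! : ℚ) = (k+1) * (k)! := by
    rw [Nat.factorial_succ]; push_cast; ring
  have hmk1 : (((m+k+1))! : ℚ) = (m+k+1) * ((m+k))! := by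
    rw [Nat.factorial_succ]; push_cast; ring
  have h2m1 : ((2*(m+1))! : ℚ) = (2*m+2) * (2*m+1) * ((2*m))! := by
    rw [show 2*(m+1) = (2*m+1)+1 from by ring, Nat.factorial_succ,
       show 2*m+1 = (2*m)+1 from rfl, Nat.factorial_succ]
    push_cast; ring
  rw [hk1, hmk1, h2m1]
  have hk1' : ((k:ℚ)+1) ≠ 0 := by positivity
  have h2m1' : (2*(m:ℚ)+1) ≠ 0 := by positivity
  have h2m2' : (2*(m:ℚ)+2) ≠ 0 := by positivity
  push_cast
  field_simp
  ring
end

noncomputable section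
open Nat Finset

lemma fac_succ (n : ℕ) : (((n + 1))! : ℚ) = ((n:ℚ) + 1) * ((n)! : ℚ) := by
  rw [Nat.factorial_succ]; push_cast; ring

def SQ (x : ℕ) : ℚ := ∑ m ∈ Finset.range (x + 1), fQ x m

lemma hQ_zero (x : ℕ) : hQ x 0 = 0 := by simp [hQ]

lemma hQ_top (x : ℕ) : hQ x (x + 1) = -((x:ℚ)^2 * (2*(x:ℚ)+1)^2) * fQ (x+1) (x+1) := by
  unfold hQ fQ
  rw [show x + 1 - (x + 1) = 0 from by omega]
  simp only [Nat.factorial_zero]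
  push_cast
  ring

lemma rQ_step (y : ℕ) :
    ((y:ℚ)+1)^2 * (2*((y:ℚ)+1)+1)^2 * rQ (y+1+1)
      = ((y:ℚ)+1+1)^2 * (16*((y:ℚ)+1)^2-1) * rQ (y+1) := by
  unfold rQ
  rw [show 4 * (y+1+1) - 2 = 4*y+2+1+1+1+1 from by omega,
      show 2 * (y+1+1) - 1 = 2*y+1+1+1 from by omega,
      show 2 * (y+1+1) = 2*y+1+1+1+1 from by omega,
      show 4 * (y+1) - 2 = 4*y+2 from by omega,
      show 2 * (y+1) - 1 = 2*y+1 from by omega,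
      show 2 * (y+1) = 2*y+1+1 from by omega]
  simp only [fac_succ]
  have h1 : ((4*y+2)! : ℚ) ≠ 0 := by exact_mod_cast (Nat.factorial_pos _).ne'
  have h2 : ((2*y+1)! : ℚ) ≠ 0 := by exact_mod_cast (Nat.factorial_pos _).ne'
  have h3 : (((y+1))! : ℚ) ≠ 0 := by exact_mod_cast (Nat.factorial_pos _).ne'
  push_cast
  field_simp
  ring

lemma SQ_eq : ∀ y : ℕ, SQ (y + 1) = rQ (y + 1) := by
  intro y
  induction y with
  | zero =>
    show SQ 1 = rQ 1
    rw [SQ]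
    rw [Finset.sum_range_succ, Finset.sum_range_succ, Finset.sum_range_zero]
    unfold fQ rQ
    norm_num [Nat.factorial]
  | succ y ih =>
    set x := y + 1 with hx
    have hx1 : (1:ℕ) ≤ x := by omega
    have key : ∑ m ∈ Finset.range (x+1),
        ((x:ℚ)^2 * (2*(x:ℚ)+1)^2 * fQ (x+1) m - ((x:ℚ)+1)^2 * (16*(x:ℚ)^2-1) * fQ x m)
        = hQ x (x+1) - hQ x 0 := by
      rw [← Finset.sum_range_sub (fun m => hQ x m) (x+1)]
      exact Finset.sum_congr rfl (fun m hm => wz x m (by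
        simp only [Finset.mem_range] at hm; omega))
    rw [hQ_zero, hQ_top] at key
    rw [Finset.sum_sub_distrib, ← Finset.mul_sum, ← Finset.mul_sum] at key
    have hS : SQ (x+1) = (∑ m ∈ Finset.range (x+1), fQ (x+1) m) + fQ (x+1) (x+1) := by
      rw [SQ, Finset.sum_range_succ]
    have hSx : (∑ m ∈ Finset.range (x+1), fQ x m) = rQ x := ih
    rw [hSx] at key
    have hA : ((x:ℚ)^2 * (2*(x:ℚ)+1)^2) ≠ 0 := by
      have : (0:ℚ) < (x:ℚ) := by exact_mod_cast hx1
      positivity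
    have hstep := rQ_step y
    have hx' : (x:ℚ) = (y:ℚ) + 1 := by rw [hx]; push_cast; ring
    rw [← hx'] at hstep
    have : (x:ℚ)^2 * (2*(x:ℚ)+1)^2 * SQ (x+1) = (x:ℚ)^2 * (2*(x:ℚ)+1)^2 * rQ (x+1) := by
      rw [hS, mul_add]
      linarith [key, hstep]
    exact mul_left_cancel₀ hA this

end

noncomputable section
open Nat Finset

lemma dfact_sub (n : ℕ) : 2 ^ n * n ! * dfact (2 * n - 1) = (2 * n)! := by
  cases n with
  | zero => rfl
  | succ n =>
    rw [show 2 * (n + 1) - 1 = 2 * n + 1 from by omega,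
        show 2 * (n + 1) = (2 * n + 1) + 1 from by omega,
        Nat.factorial_succ (2 * n + 1), ← dfact_odd, Nat.factorial_succ]
    ring

lemma dfact_q (n : ℕ) : (dfact (2 * n - 1) : ℚ) = ((2 * n)! : ℚ) / (2 ^ n * (n ! : ℚ)) := by
  have h := dfact_sub n
  have h2 : ((2:ℚ) ^ n * (n ! : ℚ)) ≠ 0 := by
    have : ((n)! : ℚ) ≠ 0 := by exact_mod_cast (Nat.factorial_pos n).ne'
    positivity
  field_simp
  have h' : dfact (2 * n - 1) * (2 ^ n * n !) = (2 * n)! := by rw [← h]; ring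
  rw [← mul_assoc] at h'
  exact_mod_cast h'

def KQ (x : ℕ) : ℚ := 2 * ((2 * x)! : ℚ)^2 * (((2 * x - 1))! : ℚ) / (((4 * x)! : ℚ) * ((x)! : ℚ)^2)

lemma term_eq (x j : ℕ) (hj : j < x) :
    ((dfact (2 * j - 1) : ℚ) * (x ! : ℚ) * (dfact (2 * x - 1) : ℚ) *
        ((2 * x - 2 * j : ℕ) : ℚ) * ((2 * x - 1) ! : ℚ)) /
      ((dfact (4 * x - 1) : ℚ) * (j ! : ℚ) * ((x - j) ! : ℚ) *
        (dfact (2 * x - 2 * j - 1) : ℚ) * ((2 * j) ! : ℚ))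
    = KQ x * fQ x (x - j) := by
  obtain ⟨m, rfl⟩ : ∃ m, x = j + (m + 1) := ⟨x - j - 1, by omega⟩
  rw [show j + (m + 1) - j = m + 1 from by omega,
      show 2 * (j + (m + 1)) - 2 * j - 1 = 2 * (m + 1) - 1 from by omega,
      show 2 * (j + (m + 1)) - 2 * j = 2 * m + 2 from by omega,
      show 4 * (j + (m + 1)) - 1 = 2 * (2 * (j + (m + 1))) - 1 from by omega]
  rw [dfact_q j, dfact_q (j + (m + 1)), dfact_q (m + 1), dfact_q (2 * (j + (m + 1)))]
  unfold KQ fQ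
  rw [show j + (m + 1) - (m + 1) = j from by omega]
  have hp1 : ((2:ℚ)) ^ (j + (m + 1)) = 2 ^ j * 2 ^ (m + 1) := by rw [pow_add]
  have hp2 : ((4:ℚ)) ^ (m + 1) = 2 ^ (m + 1) * 2 ^ (m + 1) := by
    rw [← mul_pow]; norm_num
  have hp3 : ((2:ℚ)) ^ (2 * (j + (m + 1))) = (2 ^ j * 2 ^ (m + 1)) ^ 2 := by
    rw [two_mul, pow_add, hp1]; ring
  push_cast
  rw [hp1, hp2, hp3]
  have n1 : ((j)! : ℚ) ≠ 0 := by exact_mod_cast (Nat.factorial_pos _).ne'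
  have n2 : (((j + (m + 1)))! : ℚ) ≠ 0 := by exact_mod_cast (Nat.factorial_pos _).ne'
  have n3 : (((m + 1))! : ℚ) ≠ 0 := by exact_mod_cast (Nat.factorial_pos _).ne'
  have n4 : (((2 * (j + (m + 1))))! : ℚ) ≠ 0 := by exact_mod_cast (Nat.factorial_pos _).ne'
  have n5 : (((2 * j))! : ℚ) ≠ 0 := by exact_mod_cast (Nat.factorial_pos _).ne'
  have n6 : (((2 * (m + 1)))! : ℚ) ≠ 0 := by exact_mod_cast (Nat.factorial_pos _).ne'
  have n7 : (((4 * (j + (m + 1))))! : ℚ) ≠ 0 := by exact_mod_cast (Nat.factorial_pos _).ne'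
  have n8 : (((2 * (j + (m + 1)) - 1))! : ℚ) ≠ 0 := by exact_mod_cast (Nat.factorial_pos _).ne'
  have n9 : ((2:ℚ)) ^ j ≠ 0 := by positivity
  have n10 : ((2:ℚ)) ^ (m + 1) ≠ 0 := by positivity
  field_simp
  ring

lemma KQ_rQ (y : ℕ) : KQ (y + 1) * rQ (y + 1) = 2 * ((y:ℚ) + 1) / (4 * ((y:ℚ) + 1) - 1) := by
  unfold KQ rQ
  rw [show 4 * (y + 1) - 2 = 4 * y + 2 from by omega,
      show 4 * (y + 1) = 4 * y + 2 + 1 + 1 from by omega,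
      show 2 * (y + 1) - 1 = 2 * y + 1 from by omega,
      show 2 * (y + 1) = 2 * y + 1 + 1 from by omega]
  simp only [fac_succ]
  have h1 : ((4 * y + 2)! : ℚ) ≠ 0 := by exact_mod_cast (Nat.factorial_pos _).ne'
  have h2 : ((2 * y + 1)! : ℚ) ≠ 0 := by exact_mod_cast (Nat.factorial_pos _).ne'
  have h3 : (((y + 1))! : ℚ) ≠ 0 := by exact_mod_cast (Nat.factorial_pos _).ne'
  rw [show 4 * ((y:ℚ) + 1) - 1 = 4 * (y:ℚ) + 3 from by ring]
  have h4 : (4 * (y:ℚ) + 3) ≠ 0 := by positivity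
  push_cast
  field_simp
  ring

lemma fQ_zero (x : ℕ) : fQ x 0 = 0 := by simp [fQ]

lemma sum_reflect (x : ℕ) : (∑ j ∈ Finset.range x, fQ x (x - j)) = SQ x := by
  have h1 : (∑ j ∈ Finset.range x, fQ x (x - j))
      = ∑ j ∈ Finset.range x, fQ x ((x - 1 - j) + 1) := by
    refine Finset.sum_congr rfl (fun j hj => ?_)
    simp only [Finset.mem_range] at hj
    rw [show x - 1 - j + 1 = x - j from by omega]
  rw [h1, Finset.sum_range_reflect (fun m => fQ x (m + 1)) x]
  rw [SQ, Finset.sum_range_succ' (fun m => fQ x m) x, fQ_zero, add_zero]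

end

open Nat in
/-- Closed form for `P (2x) (2x)`. -/
theorem stmt_2 (x : ℕ) (hx : 1 ≤ x) :
    P (2 * x) (2 * x) =
      ∑ j ∈ Finset.range x,
        ((dfact (2 * j - 1) : ℚ) * (x ! : ℚ) * (dfact (2 * x - 1) : ℚ) *
            ((2 * x - 2 * j : ℕ) : ℚ) * ((2 * x - 1) ! : ℚ)) /
          ((dfact (4 * x - 1) : ℚ) * (j ! : ℚ) * ((x - j) ! : ℚ) *
            (dfact (2 * x - 2 * j - 1) : ℚ) * ((2 * j) ! : ℚ)) := by
  obtain ⟨y, rfl⟩ : ∃ y, x = y + 1 := ⟨x - 1, by omega⟩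
  rw [Pval (2 * (y + 1)) (2 * (y + 1)) le_rfl]
  have hsum : (∑ j ∈ Finset.range (y + 1),
        ((dfact (2 * j - 1) : ℚ) * ((y + 1) ! : ℚ) * (dfact (2 * (y + 1) - 1) : ℚ) *
            ((2 * (y + 1) - 2 * j : ℕ) : ℚ) * ((2 * (y + 1) - 1) ! : ℚ)) /
          ((dfact (4 * (y + 1) - 1) : ℚ) * (j ! : ℚ) * (((y + 1) - j) ! : ℚ) *
            (dfact (2 * (y + 1) - 2 * j - 1) : ℚ) * ((2 * j) ! : ℚ)))
      = KQ (y + 1) * SQ (y + 1) := by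
    rw [show KQ (y + 1) * SQ (y + 1)
        = ∑ j ∈ Finset.range (y + 1), KQ (y + 1) * fQ (y + 1) ((y + 1) - j) from by
      rw [← Finset.mul_sum, sum_reflect]]
    refine Finset.sum_congr rfl (fun j hj => ?_)
    exact term_eq (y + 1) j (by simpa using hj)
  rw [hsum, SQ_eq, KQ_rQ]
  push_cast
  ring_nf
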